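/- Let r and q be real numbers with r ∉ {0,1} and q ≠ 0, and let F_{r,q}(x) = ((cosh(rx))^{q/r} − 1) / ((cosh x)^q − 1) for x > 0. If (r,q) belongs to {(u,v) : u < 0, v ≤ min(0, (2/3)(u+1))} \ {(−1,0)}, or {(u,v) : 0 < u < 1, v ≥ max(2u, (2/3)(u+1))} \ {(1/2,1)}, or {(u,v) : 1 < u, v ≤ min(2, (2/3)(u+1))} \ {(2,2)}, then F_{r,q} is strictly decreasing on (0,+∞). -/

import Mathlib

open Real

/-- The function `F_{r,q}` defined on `(0,+∞)`. -/
noncomputable def Frq (r q : ℝ) (x : ℝ) : ℝ :=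
  ((Real.cosh (r * x)) ^ (q / r) - 1) / ((Real.cosh x) ^ q - 1)


/-- Generic induction engine: `W n = α + β X^n + γ Y^n` with `W 3 ≥ 0` and telescoping
increments `K (X^{n-1} - Y^{n-1}) ≥ 0`. -/
private lemma gen_ind (α β γ X Y K : ℝ) (hY : 0 ≤ Y) (hXY : Y ≤ X) (hK : 0 ≤ K)
    (h1 : β * X * (X ^ 2 - 1) = K) (h2 : γ * Y * (Y ^ 2 - 1) = -K)
    (hbase : 0 ≤ α + β * X ^ 3 + γ * Y ^ 3) :
    ∀ k : ℕ, 0 ≤ α + β * X ^ (2 * k + 3) + γ * Y ^ (2 * k + 3) := by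
  intro k
  induction k with
  | zero => simpa using hbase
  | succ k ih =>
    have hpow : Y ^ (2 * k + 2) ≤ X ^ (2 * k + 2) := pow_le_pow_left₀ hY hXY _
    have hstep : α + β * X ^ (2 * (k + 1) + 3) + γ * Y ^ (2 * (k + 1) + 3)
        = (α + β * X ^ (2 * k + 3) + γ * Y ^ (2 * k + 3))
          + K * X ^ (2 * k + 2) - K * Y ^ (2 * k + 2) := by
      linear_combination (X ^ (2 * k + 2)) * h1 + (Y ^ (2 * k + 2)) * h2
    nlinarith [mul_nonneg hK (sub_nonneg.2 hpow)]

/-- The polynomial `d_n`. -/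
private noncomputable def dP (r : ℝ) (n : ℕ) : ℝ :=
  (1 - 2 * r) - (1 + r) * (1 - r) ^ n + (2 - r) * r ^ n

private lemma dP_nonneg {r : ℝ}
    (h : r ≤ -1 ∨ (0 < r ∧ r ≤ 1 / 2) ∨ (1 < r ∧ r ≤ 2)) (k : ℕ) :
    0 ≤ dP r (2 * k + 3) := by
  have hodd : Odd (2 * k + 3) := ⟨k + 1, by ring⟩
  rcases h with h | h | h
  · -- r ≤ -1 : X = 1 - r, Y = -r
    have hK : (0:ℝ) ≤ (1 + r) * (1 - r) * r * (2 - r) := by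
      have h1 : (0:ℝ) ≤ (-(1 + r)) * (1 - r) := by nlinarith
      have h2 : (0:ℝ) ≤ (-r) * (2 - r) := by nlinarith
      nlinarith [mul_nonneg h1 h2]
    have := gen_ind (1 - 2 * r) (-(1 + r)) (-(2 - r)) (1 - r) (-r)
      ((1 + r) * (1 - r) * r * (2 - r))
      (by linarith) (by linarith) hK (by ring) (by ring)
      (by nlinarith [sq_nonneg r]) k
    have hneg : (-r) ^ (2 * k + 3) = -(r ^ (2 * k + 3)) := hodd.neg_pow r
    unfold dP
    nlinarith [this, hneg]
  · -- 0 < r ≤ 1/2 : X = 1 - r, Y = r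
    have hK : (0:ℝ) ≤ (1 + r) * (1 - r) * r * (2 - r) := by
      have h1 : (0:ℝ) ≤ (1 + r) * (1 - r) := by nlinarith
      have h2 : (0:ℝ) ≤ r * (2 - r) := by nlinarith
      nlinarith [mul_nonneg h1 h2]
    have := gen_ind (1 - 2 * r) (-(1 + r)) (2 - r) (1 - r) r
      ((1 + r) * (1 - r) * r * (2 - r))
      (le_of_lt h.1) (by linarith) hK (by ring) (by ring)
      (by nlinarith) k
    unfold dP
    linarith [this]
  · -- 1 < r ≤ 2 : X = r, Y = r - 1
    have hK : (0:ℝ) ≤ (2 - r) * r * (r ^ 2 - 1) := by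
      have h1 : (0:ℝ) ≤ (2 - r) * r := by nlinarith
      have h2 : (0:ℝ) ≤ r ^ 2 - 1 := by nlinarith
      nlinarith [mul_nonneg h1 h2]
    have := gen_ind (1 - 2 * r) (2 - r) (1 + r) r (r - 1)
      ((2 - r) * r * (r ^ 2 - 1))
      (by linarith) (by linarith) hK (by ring) (by ring)
      (by nlinarith) k
    have hneg : (1 - r) ^ (2 * k + 3) = -((r - 1) ^ (2 * k + 3)) := by
      rw [show (1 - r) = -(r - 1) by ring, hodd.neg_pow]
    unfold dP
    rw [hneg]
    linarith [this]

private lemma dP5 (r : ℝ) : dP r 5 = (1 + r) * (1 - r) * r * (2 - r) * (1 - 2 * r) := by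
  unfold dP; ring

/-- Bernoulli-type: `(1+s)^n ≥ 1 + s^n` for `s ≥ 0`, `n ≥ 1`. -/
private lemma one_add_pow_ge {s : ℝ} (hs : 0 ≤ s) (n : ℕ) :
    1 + s ^ (n + 1) ≤ (1 + s) ^ (n + 1) := by
  induction n with
  | zero => simp
  | succ n ih =>
    have hsn : 0 ≤ s ^ (n + 1) := pow_nonneg hs _
    have hp : (0:ℝ) ≤ (1 + s) ^ (n + 1) := pow_nonneg (by linarith) _
    calc 1 + s ^ (n + 1 + 1) = 1 + s * s ^ (n + 1) := by ring
      _ ≤ (1 + s) * (1 + s ^ (n + 1)) := by nlinarith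
      _ ≤ (1 + s) * (1 + s) ^ (n + 1) := by nlinarith
      _ = (1 + s) ^ (n + 1 + 1) := by ring

/-- Taylor coefficient (numerator). -/
private noncomputable def Ccoef (r q : ℝ) (n : ℕ) : ℝ :=
  q * ((1 - r) ^ n + r ^ n - 1) + 2 * (r - r ^ n)

/-- abbreviation for the hypothesis on `(r, q)`. -/
private def Hyp (r q : ℝ) : Prop :=
  (r < 0 ∧ q ≤ min 0 (2 / 3 * (r + 1)) ∧ ¬(r = -1 ∧ q = 0)) ∨
  (0 < r ∧ r < 1 ∧ max (2 * r) (2 / 3 * (r + 1)) ≤ q ∧ ¬(r = 1 / 2 ∧ q = 1)) ∨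
  (1 < r ∧ q ≤ min 2 (2 / 3 * (r + 1)) ∧ ¬(r = 2 ∧ q = 2))

/-- relate `Ccoef` at the boundary value `q₀ = 2(1+r)/3` with `dP`. -/
private lemma q0_identity (r : ℝ) (n : ℕ) :
    2 / 3 * (r + 1) * ((1 - r) ^ n + r ^ n - 1) + 2 * (r - r ^ n) = -(2 / 3) * dP r n := by
  unfold dP; ring

private lemma C_odd_nonpos {r q : ℝ} (hq : q ≠ 0) (h : Hyp r q) (n : ℕ) :
    Ccoef r q (2 * n + 1) ≤ 0 := by
  unfold Ccoef
  rcases n with _ | k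
  · norm_num
  -- now exponent is 2*(k+1)+1 = 2*k+3
  have hm : 2 * (k + 1) + 1 = 2 * k + 3 := by ring
  rw [hm]
  have hodd : Odd (2 * k + 3) := ⟨k + 1, by ring⟩
  set m := 2 * k + 3 with hmdef
  have hm1 : 1 ≤ m := by omega
  rcases h with ⟨hr, hq2, _⟩ | ⟨hr, hr1, hq2, _⟩ | ⟨hr, hq2, _⟩
  · -- r < 0
    have hqneg : q < 0 := lt_of_le_of_ne (le_trans hq2 (min_le_left _ _)) hq
    have hb : 0 ≤ (1 - r) ^ m + r ^ m - 1 := by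
      have h1 : 1 + (-r) ^ (2 * k + 2 + 1) ≤ (1 + -r) ^ (2 * k + 2 + 1) :=
        one_add_pow_ge (by linarith) (2 * k + 2)
      have h2 : (-r) ^ (2 * k + 3) = -(r ^ (2 * k + 3)) := hodd.neg_pow r
      have h3 : (1 + -r) = (1 - r) := by ring
      rw [show 2 * k + 2 + 1 = 2 * k + 3 by ring, h2, h3] at h1
      simp only [hmdef]; linarith
    rcases le_or_gt (-1) r with hr2 | hr2
    · -- -1 ≤ r < 0 : direct
      have hrm : r ≤ r ^ m := by
        have h1 : (-r) ^ m ≤ -r := by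
          apply pow_le_of_le_one (by linarith) (by linarith) (by omega)
        have h2 : (-r) ^ m = -(r ^ m) := hodd.neg_pow r
        linarith
      nlinarith [mul_nonneg (neg_nonneg.2 hqneg.le) hb]
    · -- r < -1 : via dP
      have hd := dP_nonneg (Or.inl hr2.le) k
      have hq3 : q ≤ 2 / 3 * (r + 1) := le_trans hq2 (min_le_right _ _)
      have := q0_identity r m
      nlinarith [mul_le_mul_of_nonneg_right hq3 hb]
  · -- 0 < r < 1
    have hb : (1 - r) ^ m + r ^ m - 1 ≤ 0 := by
      have h1 : (1 - r) ^ m ≤ 1 - r :=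
        pow_le_of_le_one (by linarith) (by linarith) (by omega)
      have h2 : r ^ m ≤ r := pow_le_of_le_one (by linarith) (by linarith) (by omega)
      linarith
    rcases le_or_gt r (1 / 2) with hr2 | hr2
    · -- use q ≥ 2(1+r)/3
      have hd := dP_nonneg (Or.inr (Or.inl ⟨hr, hr2⟩)) k
      have hq3 : 2 / 3 * (r + 1) ≤ q := le_trans (le_max_right _ _) hq2
      have := q0_identity r m
      nlinarith [mul_le_mul_of_nonpos_right hq3 hb]
    · -- use q ≥ 2r
      have hq3 : 2 * r ≤ q := le_trans (le_max_left _ _) hq2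
      have hpow : (1 - r) ^ (2 * k + 2) ≤ r ^ (2 * k + 2) :=
        pow_le_pow_left₀ (by linarith) (by linarith) _
      have hid : 2 * r * ((1 - r) ^ m + r ^ m - 1) + 2 * (r - r ^ m)
          = -(2 * r * (1 - r) * (r ^ (2 * k + 2) - (1 - r) ^ (2 * k + 2))) := by
        simp only [hmdef, show 2 * k + 3 = (2 * k + 2) + 1 by ring, pow_succ]
        ring
      have hfac : 0 ≤ 2 * r * (1 - r) * (r ^ (2 * k + 2) - (1 - r) ^ (2 * k + 2)) := by
        have h1 : (0:ℝ) ≤ 2 * r * (1 - r) := by nlinarith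
        exact mul_nonneg h1 (by linarith)
      nlinarith [mul_le_mul_of_nonpos_right hq3 hb]
  · -- 1 < r
    have hb : 0 ≤ (1 - r) ^ m + r ^ m - 1 := by
      have h1 : 1 + (r - 1) ^ (2 * k + 2 + 1) ≤ (1 + (r - 1)) ^ (2 * k + 2 + 1) :=
        one_add_pow_ge (by linarith) (2 * k + 2)
      have h2 : (1 - r) ^ m = -((r - 1) ^ m) := by
        rw [show (1 - r) = -(r - 1) by ring, hodd.neg_pow]
      have h3 : (1 + (r - 1)) = r := by ring
      rw [show 2 * k + 2 + 1 = 2 * k + 3 by ring, h3] at h1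
      simp only [hmdef, h2]; linarith
    rcases le_or_gt r 2 with hr2 | hr2
    · -- use q ≤ 2(1+r)/3
      have hd := dP_nonneg (Or.inr (Or.inr ⟨hr, hr2⟩)) k
      have hq3 : q ≤ 2 / 3 * (r + 1) := le_trans hq2 (min_le_right _ _)
      have := q0_identity r m
      nlinarith [mul_le_mul_of_nonneg_right hq3 hb]
    · -- use q ≤ 2
      have hq3 : q ≤ 2 := le_trans hq2 (min_le_left _ _)
      have hpow : r - 1 ≤ (r - 1) ^ m := le_self_pow₀ (by linarith) (by omega)
      have h2 : (1 - r) ^ m = -((r - 1) ^ m) := by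
        rw [show (1 - r) = -(r - 1) by ring, hodd.neg_pow]
      have hid : 2 * ((1 - r) ^ m + r ^ m - 1) + 2 * (r - r ^ m)
          = 2 * (r - 1) - 2 * (r - 1) ^ m := by rw [h2]; ring
      nlinarith [mul_le_mul_of_nonneg_right hq3 hb]
private lemma C5_neg {r q : ℝ} (hr0 : r ≠ 0) (hq : q ≠ 0) (h : Hyp r q) :
    Ccoef r q 5 < 0 := by
  unfold Ccoef
  have hd5 := dP5 r
  rcases h with ⟨hr, hq2, hex⟩ | ⟨hr, hr1, hq2, hex⟩ | ⟨hr, hq2, hex⟩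
  · -- r < 0
    have hqneg : q < 0 := lt_of_le_of_ne (le_trans hq2 (min_le_left _ _)) hq
    rcases le_or_gt (-1) r with hr2 | hr2
    · -- -1 ≤ r < 0
      have hb : 0 < (1 - r) ^ 5 + r ^ 5 - 1 := by nlinarith [sq_nonneg r, sq_nonneg (r + 1)]
      have hrm : r ≤ r ^ 5 := by
        have h2 : r ^ 2 ≤ 1 := by nlinarith
        have h3 : r ^ 4 ≤ 1 := by nlinarith [sq_nonneg r]
        nlinarith [mul_nonneg (neg_nonneg.2 hr.le) (by linarith : (0:ℝ) ≤ 1 - r ^ 4)]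
      nlinarith [mul_pos (neg_pos.2 hqneg) hb]
    · -- r < -1
      have hb : 0 ≤ (1 - r) ^ 5 + r ^ 5 - 1 := by nlinarith [sq_nonneg r, sq_nonneg (r + 1)]
      have hq3 : q ≤ 2 / 3 * (r + 1) := le_trans hq2 (min_le_right _ _)
      have hd : 0 < dP r 5 := by
        rw [hd5]
        have h1 : (0:ℝ) < (-(1 + r)) * (1 - r) := by nlinarith
        have h2 : (0:ℝ) < (-r) * (2 - r) := by nlinarith
        nlinarith [mul_pos (mul_pos h1 h2) (show (0:ℝ) < 1 - 2 * r by linarith)]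
      have := q0_identity r 5
      nlinarith [mul_le_mul_of_nonneg_right hq3 hb]
  · -- 0 < r < 1
    have hb : (1 - r) ^ 5 + r ^ 5 - 1 < 0 := by nlinarith [sq_nonneg r, sq_nonneg (r - 1), mul_pos hr (show (0:ℝ) < 1 - r by linarith)]
    rcases lt_trichotomy r (1 / 2) with hr2 | hr2 | hr2
    · have hq3 : 2 / 3 * (r + 1) ≤ q := le_trans (le_max_right _ _) hq2
      have hd : 0 < dP r 5 := by
        rw [hd5]
        have h1 : (0:ℝ) < (1 + r) * (1 - r) := by nlinarith
        have h2 : (0:ℝ) < r * (2 - r) := by nlinarith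
        nlinarith [mul_pos (mul_pos h1 h2) (show (0:ℝ) < 1 - 2 * r by linarith)]
      have := q0_identity r 5
      nlinarith [mul_le_mul_of_nonpos_right hq3 hb.le]
    · -- r = 1/2, q > 1
      subst hr2
      have hq1 : 1 ≤ q := by
        have h1 : 2 * (1 / 2 : ℝ) ≤ q := le_trans (le_max_left _ _) hq2
        linarith
      have hqne : q ≠ 1 := fun hq1' => hex ⟨rfl, hq1'⟩
      have hq1' : 1 < q := lt_of_le_of_ne hq1 (Ne.symm hqne)
      norm_num
      nlinarith
    · -- r > 1/2 : use q ≥ 2r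
      have hq3 : 2 * r ≤ q := le_trans (le_max_left _ _) hq2
      have hpow : (1 - r) ^ 4 < r ^ 4 := by
        apply pow_lt_pow_left₀ (by linarith) (by linarith) (by norm_num)
      have hid : 2 * r * ((1 - r) ^ 5 + r ^ 5 - 1) + 2 * (r - r ^ 5)
          = -(2 * r * (1 - r) * (r ^ 4 - (1 - r) ^ 4)) := by ring
      have hfac : 0 < 2 * r * (1 - r) * (r ^ 4 - (1 - r) ^ 4) := by
        have h1 : (0:ℝ) < 2 * r * (1 - r) := by nlinarith
        exact mul_pos h1 (by linarith)
      nlinarith [mul_le_mul_of_nonpos_right hq3 hb.le]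
  · -- 1 < r
    have hb : 0 < (1 - r) ^ 5 + r ^ 5 - 1 := by nlinarith [sq_nonneg r, sq_nonneg (r - 1), mul_pos (show (0:ℝ) < r - 1 by linarith) (show (0:ℝ) < r by linarith)]
    rcases lt_trichotomy r 2 with hr2 | hr2 | hr2
    · have hq3 : q ≤ 2 / 3 * (r + 1) := le_trans hq2 (min_le_right _ _)
      have hd : 0 < dP r 5 := by
        rw [hd5]
        have h1 : (0:ℝ) < (1 + r) * (r - 1) := by nlinarith
        have h2 : (0:ℝ) < r * (2 - r) := by nlinarith
        nlinarith [mul_pos (mul_pos h1 h2) (show (0:ℝ) < 2 * r - 1 by linarith)]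
      have := q0_identity r 5
      nlinarith [mul_le_mul_of_nonneg_right hq3 hb.le]
    · -- r = 2, q < 2
      subst hr2
      have hq3 : q ≤ 2 := le_trans hq2 (min_le_left _ _)
      have hqne : q ≠ 2 := fun hq2' => hex ⟨rfl, hq2'⟩
      have hq2' : q < 2 := lt_of_le_of_ne hq3 hqne
      norm_num
      nlinarith
    · -- r > 2 : use q ≤ 2
      have hq3 : q ≤ 2 := le_trans hq2 (min_le_left _ _)
      have hpow : r - 1 < (r - 1) ^ 5 := by nlinarith [sq_nonneg ((r-1)^2 - 1), sq_nonneg (r - 1)]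
      have hid : 2 * ((1 - r) ^ 5 + r ^ 5 - 1) + 2 * (r - r ^ 5)
          = 2 * (r - 1) - 2 * (r - 1) ^ 5 := by ring
      nlinarith [mul_le_mul_of_nonneg_right hq3 hb.le]
private lemma psi_neg {r q : ℝ} (hr0 : r ≠ 0) (hq : q ≠ 0) (h : Hyp r q)
    {t : ℝ} (ht : 0 < t) :
    q * Real.sinh ((1 - r) * t) + (2 * r - q) * Real.sinh t
      + (q - 2) * Real.sinh (r * t) < 0 := by
  have h1 := Real.hasSum_sinh ((1 - r) * t)
  have h2 := Real.hasSum_sinh t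
  have h3 := Real.hasSum_sinh (r * t)
  have hS : HasSum (fun n : ℕ => Ccoef r q (2 * n + 1) * t ^ (2 * n + 1) / (Nat.factorial (2 * n + 1) : ℝ))
      (q * Real.sinh ((1 - r) * t) + (2 * r - q) * Real.sinh t
        + (q - 2) * Real.sinh (r * t)) := by
    have hsum := ((h1.mul_left q).add (h2.mul_left (2 * r - q))).add (h3.mul_left (q - 2))
    refine HasSum.congr_fun hsum ?_
    intro n
    have hfac : (Nat.factorial (2 * n + 1) : ℝ) ≠ 0 := Nat.cast_ne_zero.2 (Nat.factorial_ne_zero _)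
    unfold Ccoef
    rw [mul_pow, mul_pow]
    field_simp
    ring
  set A := Ccoef r q 5 * t ^ 5 / 120 with hA
  have hS2 : HasSum (fun n : ℕ => if n = 2 then A else 0) A := hasSum_ite_eq 2 A
  have hle : ∀ n : ℕ, Ccoef r q (2 * n + 1) * t ^ (2 * n + 1) / (Nat.factorial (2 * n + 1) : ℝ)
      ≤ (if n = 2 then A else 0) := by
    intro n
    by_cases hn : n = 2
    · subst hn
      simp only [if_true]
      rw [hA]
      norm_num [Nat.factorial]
    · simp only [hn, if_false]
      have hC := C_odd_nonpos hq h n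
      have hts : (0:ℝ) < t ^ (2 * n + 1) := pow_pos ht _
      have hfac : (0:ℝ) < (Nat.factorial (2 * n + 1) : ℝ) := Nat.cast_pos.2 (Nat.factorial_pos _)
      exact div_nonpos_of_nonpos_of_nonneg (mul_nonpos_of_nonpos_of_nonneg hC hts.le) hfac.le
  have hfin := hasSum_le hle hS hS2
  have hA_neg : A < 0 := by
    rw [hA]
    have := C5_neg hr0 hq h
    have hts : (0:ℝ) < t ^ 5 := pow_pos ht 5
    apply div_neg_of_neg_of_pos (mul_neg_of_neg_of_pos this hts) (by norm_num)
  linarith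
/-- numerator of `F'` building block. -/
private noncomputable def Nf (r q : ℝ) (x : ℝ) : ℝ :=
  Real.cosh (r * x) ^ (q / r - 1) * Real.sinh (r * x)

private noncomputable def Df (q : ℝ) (x : ℝ) : ℝ :=
  Real.cosh x ^ (q - 1) * Real.sinh x

private lemma hasDerivAt_cosh_rpow (c p x : ℝ) :
    HasDerivAt (fun y => Real.cosh (c * y) ^ p)
      (p * Real.cosh (c * x) ^ (p - 1) * (Real.sinh (c * x) * c)) x := by
  have h1 : HasDerivAt (fun y : ℝ => c * y) c x := by
    simpa using (hasDerivAt_id x).const_mul c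
  have h2 : HasDerivAt (fun y : ℝ => Real.cosh (c * y)) (Real.sinh (c * x) * c) x :=
    (Real.hasDerivAt_cosh (c * x)).comp x h1
  exact (Real.hasDerivAt_rpow_const (Or.inl (Real.cosh_pos (c * x)).ne')).comp x h2

private lemma hasDerivAt_sinh_mul (c x : ℝ) :
    HasDerivAt (fun y => Real.sinh (c * y)) (Real.cosh (c * x) * c) x := by
  have h1 : HasDerivAt (fun y : ℝ => c * y) c x := by
    simpa using (hasDerivAt_id x).const_mul c
  exact (Real.hasDerivAt_sinh (c * x)).comp x h1

private lemma hasDerivAt_f {r : ℝ} (q : ℝ) (hr0 : r ≠ 0) (x : ℝ) :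
    HasDerivAt (fun y => Real.cosh (r * y) ^ (q / r) - 1) (q * Nf r q x) x := by
  have h := (hasDerivAt_cosh_rpow r (q / r) x).sub_const 1
  convert h using 1 <;> try rfl
  unfold Nf
  field_simp
  try ring

private lemma hasDerivAt_g (q x : ℝ) :
    HasDerivAt (fun y => Real.cosh y ^ q - 1) (q * Df q x) x := by
  have h2 : HasDerivAt (fun y : ℝ => Real.cosh y ^ q)
      (q * Real.cosh x ^ (q - 1) * Real.sinh x) x := by
    have := (Real.hasDerivAt_rpow_const (p := q)
      (Or.inl (Real.cosh_pos x).ne')).comp x (Real.hasDerivAt_cosh x)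
    convert this using 1 <;> try rfl
    try ring
  have h := h2.sub_const 1
  convert h using 1 <;> try rfl
  unfold Df
  ring

private lemma hasDerivAt_N (r q x : ℝ) (hr0 : r ≠ 0) :
    HasDerivAt (Nf r q)
      (Real.cosh (r * x) ^ (q / r - 2)
        * ((q - r) * Real.sinh (r * x) ^ 2 + r * Real.cosh (r * x) ^ 2)) x := by
  have hA := hasDerivAt_cosh_rpow r (q / r - 1) x
  have hB := hasDerivAt_sinh_mul r x
  have h := hA.mul hB
  convert h using 1 <;> try rfl
  have hc : (0:ℝ) < Real.cosh (r * x) := Real.cosh_pos _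
  have e1 : Real.cosh (r * x) ^ (q / r - 1)
      = Real.cosh (r * x) ^ (q / r - 2) * Real.cosh (r * x) := by
    rw [show q / r - 1 = (q / r - 2) + 1 by ring, Real.rpow_add_one hc.ne']
  rw [show q / r - 1 - 1 = q / r - 2 by ring, e1]
  field_simp
  try ring

private lemma hasDerivAt_D (q x : ℝ) :
    HasDerivAt (Df q)
      (Real.cosh x ^ (q - 2)
        * ((q - 1) * Real.sinh x ^ 2 + Real.cosh x ^ 2)) x := by
  have hA : HasDerivAt (fun y : ℝ => Real.cosh y ^ (q - 1))
      ((q - 1) * Real.cosh x ^ (q - 2) * Real.sinh x) x := by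
    have := (Real.hasDerivAt_rpow_const (p := q - 1)
      (Or.inl (Real.cosh_pos x).ne')).comp x (Real.hasDerivAt_cosh x)
    convert this using 1 <;> try rfl
    try rw [show q - 1 - 1 = q - 2 by ring]
    try ring
  have h := hA.mul (Real.hasDerivAt_sinh x)
  convert h using 1 <;> try rfl
  have hc : (0:ℝ) < Real.cosh x := Real.cosh_pos _
  have e1 : Real.cosh x ^ (q - 1) = Real.cosh x ^ (q - 2) * Real.cosh x := by
    rw [show q - 1 = (q - 2) + 1 by ring, Real.rpow_add_one hc.ne']
  rw [e1]
  ring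

private lemma Df_pos {q x : ℝ} (hx : 0 < x) : 0 < Df q x :=
  mul_pos (Real.rpow_pos_of_pos (Real.cosh_pos x) _) (by rwa [Real.sinh_pos_iff])

/-- The key inequality: the numerator of `(Nf/Df)'` is negative. -/
private lemma deriv_num_neg {r q : ℝ} (hr0 : r ≠ 0) (hq : q ≠ 0) (h : Hyp r q)
    {x : ℝ} (hx : 0 < x) :
    (Real.cosh (r * x) ^ (q / r - 2)
        * ((q - r) * Real.sinh (r * x) ^ 2 + r * Real.cosh (r * x) ^ 2)) * Df q x
      - Nf r q x * (Real.cosh x ^ (q - 2)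
        * ((q - 1) * Real.sinh x ^ 2 + Real.cosh x ^ 2)) < 0 := by
  unfold Nf Df
  have hca : (0:ℝ) < Real.cosh x := Real.cosh_pos x
  have hcb : (0:ℝ) < Real.cosh (r * x) := Real.cosh_pos (r * x)
  have e1 : Real.cosh x ^ (q - 1) = Real.cosh x ^ (q - 2) * Real.cosh x := by
    rw [show q - 1 = (q - 2) + 1 by ring, Real.rpow_add_one hca.ne']
  have e2 : Real.cosh (r * x) ^ (q / r - 1)
      = Real.cosh (r * x) ^ (q / r - 2) * Real.cosh (r * x) := by
    rw [show q / r - 1 = (q / r - 2) + 1 by ring, Real.rpow_add_one hcb.ne']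
  have hpsi := psi_neg hr0 hq h (t := 2 * x) (by linarith)
  have hE : q * Real.sinh ((1 - r) * (2 * x)) + (2 * r - q) * Real.sinh (2 * x)
      + (q - 2) * Real.sinh (r * (2 * x))
      = 4 * (((q - r) * Real.sinh (r * x) ^ 2 + r * Real.cosh (r * x) ^ 2)
            * Real.sinh x * Real.cosh x
          - Real.cosh (r * x) * Real.sinh (r * x)
            * ((q - 1) * Real.sinh x ^ 2 + Real.cosh x ^ 2)) := by
    rw [show (1 - r) * (2 * x) = 2 * x - 2 * (r * x) by ring,
      show r * (2 * x) = 2 * (r * x) by ring,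
      Real.sinh_sub, Real.sinh_two_mul x, Real.cosh_two_mul x,
      Real.sinh_two_mul (r * x), Real.cosh_two_mul (r * x)]
    rw [Real.cosh_sq x, Real.cosh_sq (r * x)]
    ring
  have hEneg : ((q - r) * Real.sinh (r * x) ^ 2 + r * Real.cosh (r * x) ^ 2)
        * Real.sinh x * Real.cosh x
      - Real.cosh (r * x) * Real.sinh (r * x)
        * ((q - 1) * Real.sinh x ^ 2 + Real.cosh x ^ 2) < 0 := by linarith
  have hP : (0:ℝ) < Real.cosh (r * x) ^ (q / r - 2) * Real.cosh x ^ (q - 2) :=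
    mul_pos (Real.rpow_pos_of_pos hcb _) (Real.rpow_pos_of_pos hca _)
  have heq : Real.cosh (r * x) ^ (q / r - 2)
        * ((q - r) * Real.sinh (r * x) ^ 2 + r * Real.cosh (r * x) ^ 2)
        * (Real.cosh x ^ (q - 1) * Real.sinh x)
      - Real.cosh (r * x) ^ (q / r - 1) * Real.sinh (r * x)
        * (Real.cosh x ^ (q - 2) * ((q - 1) * Real.sinh x ^ 2 + Real.cosh x ^ 2))
      = (Real.cosh (r * x) ^ (q / r - 2) * Real.cosh x ^ (q - 2))
        * (((q - r) * Real.sinh (r * x) ^ 2 + r * Real.cosh (r * x) ^ 2)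
            * Real.sinh x * Real.cosh x
          - Real.cosh (r * x) * Real.sinh (r * x)
            * ((q - 1) * Real.sinh x ^ 2 + Real.cosh x ^ 2)) := by
    rw [e1, e2]; ring
  rw [heq]
  exact mul_neg_of_pos_of_neg hP hEneg

/-- Sufficient conditions on `(r,q)` for `F_{r,q}` to be strictly decreasing
on `(0,+∞)`. -/
theorem Frq_strictAntiOn (r q : ℝ) (hr0 : r ≠ 0) (hr1 : r ≠ 1) (hq : q ≠ 0)
    (h : (r < 0 ∧ q ≤ min 0 (2 / 3 * (r + 1)) ∧ ¬(r = -1 ∧ q = 0)) ∨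
         (0 < r ∧ r < 1 ∧ max (2 * r) (2 / 3 * (r + 1)) ≤ q ∧ ¬(r = 1 / 2 ∧ q = 1)) ∨
         (1 < r ∧ q ≤ min 2 (2 / 3 * (r + 1)) ∧ ¬(r = 2 ∧ q = 2))) :
    StrictAntiOn (Frq r q) (Set.Ioi 0) := by
  have hH : Hyp r q := h
  -- the ratio Nf/Df is strictly decreasing on (0,∞)
  have hHanti : StrictAntiOn (fun y => Nf r q y / Df q y) (Set.Ioi 0) := by
    apply strictAntiOn_of_deriv_neg (convex_Ioi 0)
    · intro y hy
      exact (((hasDerivAt_N r q y hr0).div (hasDerivAt_D q y)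
        (Df_pos (Set.mem_Ioi.1 hy)).ne')).continuousAt.continuousWithinAt
    · intro y hy
      rw [interior_Ioi] at hy
      have hy0 : 0 < y := hy
      have hd := (hasDerivAt_N r q y hr0).div (hasDerivAt_D q y) (Df_pos hy0).ne'
      rw [show deriv (fun y => Nf r q y / Df q y) y = _ from hd.deriv]
      exact div_neg_of_neg_of_pos (deriv_num_neg hr0 hq hH hy0)
        (pow_pos (Df_pos hy0) 2)
  -- sign of the denominator
  have hgq : ∀ y : ℝ, 0 < y → 0 < q * (Real.cosh y ^ q - 1) := by
    intro y hy
    have hcy : 1 < Real.cosh y := Real.one_lt_cosh.2 (ne_of_gt hy)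
    rcases lt_or_gt_of_ne hq with hq' | hq'
    · have h1 : Real.cosh y ^ q < 1 := Real.rpow_lt_one_of_one_lt_of_neg hcy hq'
      exact mul_pos_of_neg_of_neg hq' (by linarith)
    · have h1 : 1 < Real.cosh y ^ q := by
        rw [Real.one_lt_rpow_iff_of_pos (by linarith : (0:ℝ) < Real.cosh y)]
        exact Or.inl ⟨hcy, hq'⟩
      exact mul_pos hq' (by linarith)
  have hgne : ∀ y : ℝ, 0 < y → Real.cosh y ^ q - 1 ≠ 0 := by
    intro y hy h0
    have := hgq y hy
    rw [h0, mul_zero] at this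
    exact lt_irrefl 0 this
  have hFrq : Frq r q = fun x => (Real.cosh (r * x) ^ (q / r) - 1) / (Real.cosh x ^ q - 1) :=
    rfl
  rw [hFrq]
  apply strictAntiOn_of_deriv_neg (convex_Ioi 0)
  · intro y hy
    exact ((hasDerivAt_f q hr0 y).div (hasDerivAt_g q y)
      (hgne y (Set.mem_Ioi.1 hy))).continuousAt.continuousWithinAt
  · intro x hx
    rw [interior_Ioi] at hx
    have hx0 : 0 < x := hx
    have hgx := hgne x hx0
    have hF := (hasDerivAt_f q hr0 x).div (hasDerivAt_g q x) hgx
    rw [show deriv (fun x => (Real.cosh (r * x) ^ (q / r) - 1) / (Real.cosh x ^ q - 1)) x = _ from hF.deriv]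
    apply div_neg_of_neg_of_pos _ (pow_two_pos_of_ne_zero hgx)
    -- Cauchy mean value theorem on [0, x]
    obtain ⟨c, hc, hmvt⟩ := exists_ratio_hasDerivAt_eq_ratio_slope
      (fun y => Real.cosh (r * y) ^ (q / r) - 1) (fun y => q * Nf r q y) hx0
      (fun y _ => (hasDerivAt_f q hr0 y).continuousAt.continuousWithinAt)
      (fun y _ => hasDerivAt_f q hr0 y)
      (fun y => Real.cosh y ^ q - 1) (fun y => q * Df q y)
      (fun y _ => (hasDerivAt_g q y).continuousAt.continuousWithinAt)
      (fun y _ => hasDerivAt_g q y)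
    have hc0 : 0 < c := hc.1
    have hf0 : Real.cosh (r * 0) ^ (q / r) - 1 = 0 := by
      simp [Real.cosh_zero, Real.one_rpow]
    have hg0 : Real.cosh (0:ℝ) ^ q - 1 = 0 := by
      simp [Real.cosh_zero, Real.one_rpow]
    rw [hf0, hg0] at hmvt
    have hmvt' : (Real.cosh x ^ q - 1) * Nf r q c
        = (Real.cosh (r * x) ^ (q / r) - 1) * Df q c := by
      apply mul_left_cancel₀ hq
      linear_combination hmvt
    -- strict monotonicity of the ratio of derivatives
    have hHlt : Nf r q x / Df q x < Nf r q c / Df q c :=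
      hHanti (Set.mem_Ioi.2 hc0) (Set.mem_Ioi.2 hx0) hc.2
    have h1 : Nf r q x * Df q c < Nf r q c * Df q x :=
      (div_lt_div_iff₀ (Df_pos hx0) (Df_pos hc0)).1 hHlt
    have h2 : 0 < q * (Real.cosh x ^ q - 1) / Df q c :=
      div_pos (hgq x hx0) (Df_pos hc0)
    have heq : q * Nf r q x * (Real.cosh x ^ q - 1)
          - (Real.cosh (r * x) ^ (q / r) - 1) * (q * Df q x)
        = (q * (Real.cosh x ^ q - 1) / Df q c)
          * (Nf r q x * Df q c - Nf r q c * Df q x) := by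
      have hDfc : Df q c ≠ 0 := (Df_pos hc0).ne'
      field_simp [hDfc]
      linear_combination Df q x * hmvt'
    rw [heq]
    exact mul_neg_of_pos_of_neg h2 (by linarith)
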